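/- For every b ∈ ℝ and x ∈ ℝ, almost surely under P_x: for every t > 0 at which X does not jump downward, R^{b,η_n}_t increases to R^{b,∞}_t = (b − X̲_t)^+ as n → ∞; consequently U^{b,η_n}_t := X_t + R^{b,η_n}_t increases to U^{b,∞}_t := X_t + R^{b,∞}_t for Lebesgue-a.e. t > 0. -/

import Mathlib

open MeasureTheory ProbabilityTheory Filter Set Real Topology
open scoped ENNReal

noncomputable section

namespace PoissonControl

variable {Ω : Type*} [MeasurableSpace Ω]

/-- The right-hand derivative `f'_+`. -/
def rd (f : ℝ → ℝ) (x : ℝ) : ℝ := derivWithin f (Ioi x) x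

/-- `X` is a driftless compound Poisson process under `P`: its characteristic function is
`exp(-t ∫ (1 - e^{iλz}) Π(dz))` for some finite Lévy measure `Π` with no mass at `0`. -/
def IsDriftlessCompoundPoisson (P : Measure Ω) (X : ℝ → Ω → ℝ) : Prop :=
  ∃ Pi : Measure ℝ, IsFiniteMeasure Pi ∧ Pi {0} = 0 ∧
    ∀ t : ℝ, 0 ≤ t → ∀ l : ℝ,
      ∫ ω, Complex.exp (Complex.I * (l : ℂ) * (X t ω : ℂ)) ∂P
        = Complex.exp (-(t : ℂ) *
            ∫ z : ℝ, (1 - Complex.exp (Complex.I * (l : ℂ) * (z : ℂ))) ∂Pi)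

/-- `N` is a Poisson counting process with rate `r` under `P`: it starts at `0`, has
nondecreasing right-continuous paths, stationary Poisson-distributed increments and
independent increments. -/
structure IsPoissonProcess (P : Measure Ω) (N : ℝ → Ω → ℕ) (r : ℝ) : Prop where
  rate_pos : 0 < r
  meas : ∀ t, Measurable (N t)
  zero : ∀ᵐ ω ∂P, N 0 ω = 0
  mono : ∀ᵐ ω ∂P, ∀ s t : ℝ, 0 ≤ s → s ≤ t → N s ω ≤ N t ω
  right_cont : ∀ᵐ ω ∂P, ∀ t : ℝ, 0 ≤ t →
      Tendsto (fun s => N s ω) (𝓝[>] t) (𝓝 (N t ω))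
  pois_incr : ∀ s t : ℝ, 0 ≤ s → s ≤ t → ∀ k : ℕ,
      P {ω | N t ω - N s ω = k}
        = ENNReal.ofReal (Real.exp (-(r * (t - s))) * (r * (t - s)) ^ k / Nat.factorial k)
  indep_incr : ∀ (n : ℕ) (t : ℕ → ℝ), (∀ i, 0 ≤ t i) → Monotone t →
      iIndepFun
        (fun (i : Fin n) ω => N (t (i + 1)) ω - N (t i) ω) P

/-- The setting of the stochastic control problem: a Lévy process `X` (with `X_0 = 0`,
càdlàg paths, stationary independent increments, not a driftless compound Poisson process,
with a finite exponential moment), a discount rate `q > 0`, a unit controlling cost `C`,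
and a convex running cost `f` of polynomial growth with `f'_+(-∞) < -Cq < f'_+(∞)`. -/
structure Setting (Ω : Type*) [MeasurableSpace Ω] where
  P : Measure Ω
  prob : IsProbabilityMeasure P
  X : ℝ → Ω → ℝ
  meas_X : ∀ t, Measurable (X t)
  X_zero : ∀ᵐ ω ∂P, X 0 ω = 0
  cadlag : ∀ᵐ ω ∂P, ∀ t : ℝ, 0 ≤ t →
      Tendsto (fun s => X s ω) (𝓝[>] t) (𝓝 (X t ω)) ∧
      (0 < t → ∃ l : ℝ, Tendsto (fun s => X s ω) (𝓝[<] t) (𝓝 l))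
  stat_incr : ∀ s t : ℝ, 0 ≤ s → s ≤ t →
      Measure.map (fun ω => X t ω - X s ω) P = Measure.map (X (t - s)) P
  indep_incr : ∀ (n : ℕ) (t : ℕ → ℝ), (∀ i, 0 ≤ t i) → Monotone t →
      iIndepFun
        (fun (i : Fin n) ω => X (t (i + 1)) ω - X (t i) ω) P
  not_cpp : ¬ IsDriftlessCompoundPoisson P X
  exp_moment : ∃ θ : ℝ, 0 < θ ∧ Integrable (fun ω => Real.exp (θ * |X 1 ω|)) P
  q : ℝ
  q_pos : 0 < q
  Ccost : ℝ
  f : ℝ → ℝ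
  f_convex : ConvexOn ℝ univ f
  f_growth : ∃ k₁ k₂ : ℝ, ∃ Ngr : ℕ, 0 < k₁ ∧ 0 < k₂ ∧
      ∀ x : ℝ, |f x| ≤ k₁ + k₂ * |x| ^ Ngr
  slope_below : ∃ x₀ : ℝ, rd f x₀ < -Ccost * q
  slope_above : ∃ x₁ : ℝ, -Ccost * q < rd f x₁

/-- Poissonian observation of the Lévy process: a Poisson process `Nproc` of rate `η`,
independent of `X`. -/
structure Obs {Ω : Type*} [MeasurableSpace Ω] (S : Setting Ω) where
  η : ℝ
  Nproc : ℝ → Ω → ℕ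
  pp : IsPoissonProcess S.P Nproc η
  indep_X : IndepFun (fun ω => fun t : ℝ => S.X t ω) (fun ω => fun t : ℝ => Nproc t ω) S.P

variable {S : Setting Ω}

/-- `k`-th arrival time `T(k)` of the observation process (`T(0) = 0`). -/
def Obs.arrival (O : Obs S) (k : ℕ) (ω : Ω) : ℝ :=
  sInf {t : ℝ | 0 ≤ t ∧ k ≤ O.Nproc t ω}

/-- Control process `R^b_t = max_{1 ≤ k ≤ N_t} (b - X_{T(k)})⁺` of the periodic barrier
strategy at level `b`, for the process started at `x` (so that `X` under `P_x` is `x + X`). -/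
def Obs.barR (O : Obs S) (x b t : ℝ) (ω : Ω) : ℝ :=
  ⨆ k ∈ Finset.Icc 1 (O.Nproc t ω), max (b - (x + S.X (O.arrival k ω) ω)) 0

/-- Controlled process `U^b = X + R^b` under `P_x`. -/
def Obs.barU (O : Obs S) (x b t : ℝ) (ω : Ω) : ℝ := x + S.X t ω + O.barR x b t ω

/-- First control time `T_b` of the periodic barrier strategy: the first Poisson arrival time
at which the process (started at `x`) is observed strictly below `b`; `∞` if there is none. -/
def Obs.firstControl (O : Obs S) (x b : ℝ) (ω : Ω) : ℝ≥0∞ :=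
  sInf {s : ℝ≥0∞ | ∃ k : ℕ, 1 ≤ k ∧ s = ENNReal.ofReal (O.arrival k ω) ∧
      x + S.X (O.arrival k ω) ω < b}

/-- Discount factor `e^{-q s}` of a possibly infinite time. -/
def edisc (q : ℝ) (s : ℝ≥0∞) : ℝ := if s = ⊤ then 0 else Real.exp (-q * s.toReal)

/-- Expected cost `v_b(x)` of the periodic barrier strategy at level `b`, started at `x`.
The controlling cost `∫_{[0,∞)} e^{-qt} dR^b_t` is expressed, via integration by parts
(using `R^b_0 = 0` and monotonicity of `R^b`), as `q ∫_0^∞ e^{-qt} R^b_t dt`. -/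
def Obs.vbar (O : Obs S) (b x : ℝ) : ℝ :=
  ∫ ω, ((∫ t in Ioi (0:ℝ), Real.exp (-S.q * t) * S.f (O.barU x b t ω)) +
    S.Ccost * (S.q * ∫ t in Ioi (0:ℝ), Real.exp (-S.q * t) * O.barR x b t ω)) ∂S.P

/-- `ρ(b) = E_b[∫_0^∞ e^{-qt} f'_+(U^b_t) dt]`. -/
def Obs.rho (O : Obs S) (b : ℝ) : ℝ :=
  ∫ ω, (∫ t in Ioi (0:ℝ), Real.exp (-S.q * t) * rd S.f (O.barU b b t ω)) ∂S.P

/-- The candidate optimal barrier `b* = inf{b : ρ(b) + C ≥ 0}`. -/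
def Obs.bstar (O : Obs S) : ℝ := sInf {b : ℝ | 0 ≤ O.rho b + S.Ccost}

/-- Natural filtration of `(X, N^η)`. -/
def Obs.natFilt (O : Obs S) (t : ℝ) : MeasurableSpace Ω :=
  ⨆ s ∈ Icc (0:ℝ) t,
    (MeasurableSpace.comap (S.X s) inferInstance ⊔
      MeasurableSpace.comap (O.Nproc s) inferInstance)

/-- A strategy: a nonnegative càglàd process `ν`, adapted to the natural filtration of
`(X, N^η)`; the corresponding control is `R^pol_t = ∫_{[0,t]} ν_s dN^η_s`. -/
structure Strategy {Ω : Type*} [MeasurableSpace Ω] {S : Setting Ω} (O : Obs S) where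
  ν : ℝ → Ω → ℝ
  nonneg : ∀ t ω, 0 ≤ ν t ω
  caglad : ∀ᵐ ω ∂S.P, ∀ t : ℝ, 0 < t →
      Tendsto (fun s => ν s ω) (𝓝[<] t) (𝓝 (ν t ω)) ∧
      ∃ l : ℝ, Tendsto (fun s => ν s ω) (𝓝[>] t) (𝓝 l)
  adapted : ∀ t : ℝ, 0 ≤ t → Measurable[O.natFilt t] (ν t)

/-- Control process `R^pol_t = ∫_{[0,t]} ν_s dN^η_s = Σ_{k=1}^{N_t} ν_{T(k)}`. -/
def Obs.stratR (O : Obs S) (pol : Strategy O) (t : ℝ) (ω : Ω) : ℝ :=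
  ∑ k ∈ Finset.Icc 1 (O.Nproc t ω), pol.ν (O.arrival k ω) ω

/-- Controlled process `U^pol = X + R^pol` under `P_x`. -/
def Obs.stratU (O : Obs S) (pol : Strategy O) (x t : ℝ) (ω : Ω) : ℝ :=
  x + S.X t ω + O.stratR pol t ω

/-- Admissibility: `E_x[∫_0^∞ e^{-qt}|f(U^pol_t)| dt + ∫_0^∞ e^{-qt} dR^pol_t] < ∞`, the second
integral being expressed via integration by parts as `q ∫_0^∞ e^{-qt} R^pol_t dt`. -/
def Obs.Admissible (O : Obs S) (pol : Strategy O) (x : ℝ) : Prop :=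
  (∫⁻ ω, (∫⁻ t in Ioi (0:ℝ),
      ENNReal.ofReal (Real.exp (-S.q * t) * |S.f (O.stratU pol x t ω)|)) ∂S.P) < ⊤ ∧
  (∫⁻ ω, (∫⁻ t in Ioi (0:ℝ),
      ENNReal.ofReal (S.q * Real.exp (-S.q * t) * O.stratR pol t ω)) ∂S.P) < ⊤

/-- Expected cost `v_pol(x)` of a strategy `pol` started at `x`. -/
def Obs.vpi (O : Obs S) (pol : Strategy O) (x : ℝ) : ℝ :=
  ∫ ω, ((∫ t in Ioi (0:ℝ), Real.exp (-S.q * t) * S.f (O.stratU pol x t ω)) +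
    S.Ccost * (S.q * ∫ t in Ioi (0:ℝ), Real.exp (-S.q * t) * O.stratR pol t ω)) ∂S.P

/-- Optimal value function `v(x) = inf_{pol ∈ 𝒜} v_pol(x)`. -/
def Obs.vOpt (O : Obs S) (x : ℝ) : ℝ :=
  sInf {y : ℝ | ∃ pol : Strategy O, O.Admissible pol x ∧ y = O.vpi pol x}

/-- The operator `ℳ g(x) = inf_{l ≥ 0} { C l + g(x + l) }`. -/
def genM (C : ℝ) (g : ℝ → ℝ) (x : ℝ) : ℝ :=
  sInf {y : ℝ | ∃ l : ℝ, 0 ≤ l ∧ y = C * l + g (x + l)}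

/-- The generator `ℒ` associated with the Lévy triplet `(γ, σ, Π)`. -/
def genL (γ σ : ℝ) (Pi : Measure ℝ) (w : ℝ → ℝ) (x : ℝ) : ℝ :=
  γ * deriv w x + σ ^ 2 / 2 * deriv (deriv w) x +
    ∫ z : ℝ, (w (x + z) - w x - (if |z| < 1 then deriv w x * z else 0)) ∂Pi

/-- `X` has paths of bounded variation (on compact time intervals), a.s. -/
def HasBVPaths (S : Setting Ω) : Prop :=
  ∀ᵐ ω ∂S.P, ∀ T : ℝ, 0 < T → BoundedVariationOn (fun t => S.X t ω) (Icc 0 T)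

/-- `(γ, σ, Π)` is the Lévy–Khintchine triplet of `X`:
`E[e^{iλ X_t}] = e^{-t Ψ(λ)}` with
`Ψ(λ) = -iγλ + σ²λ²/2 + ∫ (1 - e^{iλz} + iλz 1_{|z|<1}) Π(dz)`. -/
def IsTriplet (S : Setting Ω) (γ σ : ℝ) (Pi : Measure ℝ) : Prop :=
  0 ≤ σ ∧ Pi {0} = 0 ∧ (∫⁻ z : ℝ, ENNReal.ofReal (min 1 (z ^ 2)) ∂Pi) < ⊤ ∧
  ∀ t : ℝ, 0 ≤ t → ∀ l : ℝ,
    ∫ ω, Complex.exp (Complex.I * (l : ℂ) * (S.X t ω : ℂ)) ∂S.P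
      = Complex.exp (-(t : ℂ) *
          (-(Complex.I * (γ : ℂ) * (l : ℂ)) + (σ : ℂ) ^ 2 * (l : ℂ) ^ 2 / 2 +
            ∫ z : ℝ, (1 - Complex.exp (Complex.I * (l : ℂ) * (z : ℂ)) +
              (if |z| < 1 then Complex.I * (l : ℂ) * (z : ℂ) else 0)) ∂Pi))

/-- Running infimum `X̲_t = inf_{0 ≤ s ≤ t} X_s`. -/
def Setting.runInf (S : Setting Ω) (t : ℝ) (ω : Ω) : ℝ :=
  sInf ((fun s => S.X s ω) '' Icc 0 t)

/-- Classical (continuous-observation) barrier control `R^{b,∞}_t = (b - X̲_t)⁺` under `P_x`. -/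
def Setting.classR (S : Setting Ω) (x b t : ℝ) (ω : Ω) : ℝ :=
  max (b - (x + S.runInf t ω)) 0

/-- Classical reflected (controlled) process `U^{b,∞} = X + R^{b,∞}` under `P_x`. -/
def Setting.classU (S : Setting Ω) (x b t : ℝ) (ω : Ω) : ℝ :=
  x + S.X t ω + S.classR x b t ω

/-- `ρ_∞(b) = E_b[∫_0^∞ e^{-qt} f'_+(U^{b,∞}_t) dt]`. -/
def Setting.rhoInf (S : Setting Ω) (b : ℝ) : ℝ :=
  ∫ ω, (∫ t in Ioi (0:ℝ), Real.exp (-S.q * t) * rd S.f (S.classU b b t ω)) ∂S.P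

/-- Classical optimal barrier `b*_∞ = inf{b : ρ_∞(b) + C ≥ 0}`. -/
def Setting.bstarInf (S : Setting Ω) : ℝ := sInf {b : ℝ | 0 ≤ S.rhoInf b + S.Ccost}

/-- Classical optimal value `v*_∞(x)`, the controlling cost again written via
integration by parts. -/
def Setting.vInf (S : Setting Ω) (x : ℝ) : ℝ :=
  ∫ ω, ((∫ t in Ioi (0:ℝ), Real.exp (-S.q * t) * S.f (S.classU x S.bstarInf t ω)) +
    S.Ccost * (S.q * ∫ t in Ioi (0:ℝ), Real.exp (-S.q * t) * S.classR x S.bstarInf t ω)) ∂S.P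

/-- `X` is the negative of a subordinator: it has nonincreasing paths a.s. -/
def IsNegSubordinator (S : Setting Ω) : Prop :=
  ∀ᵐ ω ∂S.P, ∀ s t : ℝ, 0 ≤ s → s ≤ t → S.X t ω ≤ S.X s ω

/-- `g` is strictly increasing at the point `b`. -/
def StrictIncrAt (g : ℝ → ℝ) (b : ℝ) : Prop :=
  (∀ y : ℝ, y < b → g y < g b) ∧ (∀ y : ℝ, b < y → g b < g y)

/-- Superposed observation process `N^{η_n} = Σ_{k=1}^n M^k`. -/
def supN (M : ℕ → ℝ → Ω → ℕ) (n : ℕ) (t : ℝ) (ω : Ω) : ℕ :=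
  ∑ k ∈ Finset.Icc 1 n, M k t ω

/-- `k`-th arrival time of the superposed observation process `N^{η_n}`. -/
def supArr (M : ℕ → ℝ → Ω → ℕ) (n k : ℕ) (ω : Ω) : ℝ :=
  sInf {t : ℝ | 0 ≤ t ∧ k ≤ supN M n t ω}

/-- Periodic barrier control process `R^{b,η_n}` at level `b`, started at `x`, driven by the
observation times of `N^{η_n}`. -/
def supR (S : Setting Ω) (M : ℕ → ℝ → Ω → ℕ) (x b : ℝ) (n : ℕ) (t : ℝ) (ω : Ω) : ℝ :=
  ⨆ k ∈ Finset.Icc 1 (supN M n t ω), max (b - (x + S.X (supArr M n k ω) ω)) 0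

/-! ### Auxiliary lemmas for Statement 18 -/

set_option linter.unusedSectionVars false
set_option linter.unusedVariables false

section Statement18Aux

variable {Ω₁ : Type*} [MeasurableSpace Ω₁]

lemma supR_nonneg (S : Setting Ω₁) (M : ℕ → ℝ → Ω₁ → ℕ) (x b : ℝ) (n : ℕ) (t : ℝ) (ω : Ω₁) :
    0 ≤ supR S M x b n t ω :=
  Real.iSup_nonneg fun _ => Real.iSup_nonneg fun _ => le_max_right _ _

lemma supR_le (S : Setting Ω₁) (M : ℕ → ℝ → Ω₁ → ℕ) (x b : ℝ) (n : ℕ) (t : ℝ) (ω : Ω₁)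
    {B : ℝ} (hB : 0 ≤ B)
    (h : ∀ k, k ∈ Finset.Icc 1 (supN M n t ω) →
      max (b - (x + S.X (supArr M n k ω) ω)) 0 ≤ B) :
    supR S M x b n t ω ≤ B :=
  Real.iSup_le (fun k => Real.iSup_le (fun hk => h k hk) hB) hB

lemma le_supR (S : Setting Ω₁) (M : ℕ → ℝ → Ω₁ → ℕ) (x b : ℝ) (n : ℕ) (t : ℝ) (ω : Ω₁)
    {B : ℝ}
    (h : ∀ k, k ∈ Finset.Icc 1 (supN M n t ω) →
      max (b - (x + S.X (supArr M n k ω) ω)) 0 ≤ B)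
    {k : ℕ} (hk : k ∈ Finset.Icc 1 (supN M n t ω)) :
    max (b - (x + S.X (supArr M n k ω) ω)) 0 ≤ supR S M x b n t ω := by
  have hbdd : BddAbove (Set.range fun j =>
      ⨆ _ : j ∈ Finset.Icc 1 (supN M n t ω), max (b - (x + S.X (supArr M n j ω) ω)) 0) := by
    refine ⟨max B 0, ?_⟩
    rintro y ⟨j, rfl⟩
    dsimp only
    by_cases hj : j ∈ Finset.Icc 1 (supN M n t ω)
    · rw [ciSup_pos (f := fun _ => max (b - (x + S.X (supArr M n j ω) ω)) 0) hj]
      exact le_max_of_le_left (h j hj)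
    · haveI : IsEmpty (j ∈ Finset.Icc 1 (supN M n t ω)) := ⟨fun hc => hj hc⟩
      rw [Real.iSup_of_isEmpty]
      exact le_max_right _ _
  calc max (b - (x + S.X (supArr M n k ω) ω)) 0
      = ⨆ _ : k ∈ Finset.Icc 1 (supN M n t ω), max (b - (x + S.X (supArr M n k ω) ω)) 0 :=
        (ciSup_pos (f := fun _ => max (b - (x + S.X (supArr M n k ω) ω)) 0) hk).symm
    _ ≤ supR S M x b n t ω := le_ciSup hbdd k

lemma bddBelow_image_Icc_of_cadlag (f : ℝ → ℝ) (t : ℝ)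
    (hrc : ∀ s : ℝ, 0 ≤ s → Tendsto f (𝓝[>] s) (𝓝 (f s)))
    (hll : ∀ s : ℝ, 0 < s → ∃ l, Tendsto f (𝓝[<] s) (𝓝 l)) :
    BddBelow (f '' Icc 0 t) := by
  rcases lt_or_ge t 0 with h0t | h0t
  · rw [Icc_eq_empty (by linarith), Set.image_empty]
    exact bddBelow_empty
  have key : ∀ s ∈ Icc (0:ℝ) t, ∃ V : Set ℝ, V ∈ 𝓝 s ∧ BddBelow (f '' (V ∩ Icc 0 t)) := by
    intro s hs
    have h1 : ∀ᶠ u in 𝓝[>] s, f s - 1 < f u :=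
      (hrc s hs.1).eventually (eventually_gt_nhds (by linarith))
    obtain ⟨u, hu, hu2⟩ := mem_nhdsGT_iff_exists_Ioo_subset.1 h1
    rcases eq_or_lt_of_le hs.1 with h0 | h0
    · refine ⟨Ioo (s - 1) u, Ioo_mem_nhds (by linarith) hu, ⟨min (f s) (f s - 1), ?_⟩⟩
      rintro y ⟨z, ⟨hz1, hz2⟩, rfl⟩
      have hzs : s ≤ z := by rw [← h0]; exact hz2.1
      rcases eq_or_lt_of_le hzs with hz | hz
      · rw [← hz]; exact min_le_left _ _
      · exact le_trans (min_le_right _ _) (le_of_lt (hu2 ⟨hz, hz1.2⟩))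
    · obtain ⟨l, hl⟩ := hll s h0
      have h2 : ∀ᶠ v in 𝓝[<] s, l - 1 < f v :=
        hl.eventually (eventually_gt_nhds (by linarith))
      obtain ⟨w, hw, hw2⟩ := mem_nhdsLT_iff_exists_Ioo_subset.1 h2
      refine ⟨Ioo w u, Ioo_mem_nhds hw hu, ⟨min (l - 1) (min (f s) (f s - 1)), ?_⟩⟩
      rintro y ⟨z, ⟨hz1, _⟩, rfl⟩
      rcases lt_trichotomy z s with hz | hz | hz
      · exact le_trans (min_le_left _ _) (le_of_lt (hw2 ⟨hz1.1, hz⟩))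
      · rw [hz]; exact le_trans (min_le_right _ _) (min_le_left _ _)
      · exact le_trans (min_le_right _ _)
          (le_trans (min_le_right _ _) (le_of_lt (hu2 ⟨hz, hz1.2⟩)))
  choose! V hV hVB using key
  obtain ⟨F, hF1, hF2⟩ :=
    (isCompact_Icc : IsCompact (Icc (0:ℝ) t)).elim_nhds_subcover V (fun s hs => hV s hs)
  have hsub : f '' Icc 0 t ⊆ ⋃ s ∈ (↑F : Set ℝ), f '' (V s ∩ Icc 0 t) := by
    rintro y ⟨z, hz, rfl⟩
    obtain ⟨s, hsF, hzV⟩ := Set.mem_iUnion₂.1 (hF2 hz)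
    exact Set.mem_iUnion₂.2 ⟨s, hsF, ⟨z, ⟨hzV, hz⟩, rfl⟩⟩
  refine BddBelow.mono hsub ?_
  rw [Set.Finite.bddBelow_biUnion F.finite_toSet]
  intro i hi
  exact hVB i (hF1 i hi)

lemma supN_mono (M : ℕ → ℝ → Ω₁ → ℕ) (ω : Ω₁)
    (hMmono : ∀ k, 1 ≤ k → ∀ s u : ℝ, 0 ≤ s → s ≤ u → M k s ω ≤ M k u ω)
    (n : ℕ) {s u : ℝ} (hs : 0 ≤ s) (hsu : s ≤ u) : supN M n s ω ≤ supN M n u ω :=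
  Finset.sum_le_sum fun k hk => hMmono k (Finset.mem_Icc.1 hk).1 s u hs hsu

lemma supN_right_const (M : ℕ → ℝ → Ω₁ → ℕ) (ω : Ω₁)
    (hMrc : ∀ k, 1 ≤ k → ∀ s : ℝ, 0 ≤ s → Tendsto (fun u => M k u ω) (𝓝[>] s) (𝓝 (M k s ω)))
    (n : ℕ) {s : ℝ} (hs : 0 ≤ s) : ∀ᶠ u in 𝓝[>] s, supN M n u ω = supN M n s ω := by
  have h : ∀ k ∈ Finset.Icc 1 n, ∀ᶠ u in 𝓝[>] s, M k u ω = M k s ω := by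
    intro k hk
    have h := hMrc k (Finset.mem_Icc.1 hk).1 s hs
    simp only [nhds_discrete] at h
    exact tendsto_pure.1 h
  filter_upwards [(Finset.Icc 1 n).eventually_all.2 h] with u hu
  exact Finset.sum_congr rfl hu

lemma supArr_mem (M : ℕ → ℝ → Ω₁ → ℕ) (ω : Ω₁)
    (hMmono : ∀ k, 1 ≤ k → ∀ s u : ℝ, 0 ≤ s → s ≤ u → M k s ω ≤ M k u ω)
    (hMrc : ∀ k, 1 ≤ k → ∀ s : ℝ, 0 ≤ s → Tendsto (fun u => M k u ω) (𝓝[>] s) (𝓝 (M k s ω)))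
    (n k : ℕ) {t : ℝ} (ht : 0 ≤ t) (hk1 : 1 ≤ k) (hk : k ≤ supN M n t ω) :
    0 ≤ supArr M n k ω ∧ supArr M n k ω ≤ t ∧ k ≤ supN M n (supArr M n k ω) ω ∧
      ∀ u, 0 ≤ u → u < supArr M n k ω → supN M n u ω < k := by
  have hdef : supArr M n k ω = sInf {u : ℝ | 0 ≤ u ∧ k ≤ supN M n u ω} := rfl
  set A := {u : ℝ | 0 ≤ u ∧ k ≤ supN M n u ω} with hA
  have hne : A.Nonempty := ⟨t, ht, hk⟩
  have hbd : BddBelow A := ⟨0, fun u hu => hu.1⟩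
  have hT0 : 0 ≤ sInf A := le_csInf hne fun u hu => hu.1
  have hTt : sInf A ≤ t := csInf_le hbd ⟨ht, hk⟩
  have hatt : k ≤ supN M n (sInf A) ω := by
    have hev := supN_right_const M ω hMrc n hT0
    obtain ⟨w, hw, hw2⟩ := mem_nhdsGT_iff_exists_Ioo_subset.1 hev
    obtain ⟨a, haA, ha⟩ := Real.lt_sInf_add_pos hne (show (0:ℝ) < w - sInf A by
      simpa using sub_pos.2 (show sInf A < w from hw))
    have haw : a < w := by linarith
    have hage : sInf A ≤ a := csInf_le hbd haA
    rcases eq_or_lt_of_le hage with he | hlt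
    · rw [he]; exact haA.2
    · rw [← hw2 ⟨hlt, haw⟩]; exact haA.2
  refine ⟨by rw [hdef]; exact hT0, by rw [hdef]; exact hTt, by rw [hdef]; exact hatt, ?_⟩
  intro u hu hult
  rw [hdef] at hult
  by_contra hc
  push_neg at hc
  exact absurd (csInf_le hbd ⟨hu, hc⟩) (not_le.2 hult)

lemma supArr_between (M : ℕ → ℝ → Ω₁ → ℕ) (ω : Ω₁)
    (hMmono : ∀ k, 1 ≤ k → ∀ s u : ℝ, 0 ≤ s → s ≤ u → M k s ω ≤ M k u ω)
    (n k : ℕ) {p q : ℝ} (hp : 0 ≤ p) (hpq : p ≤ q)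
    (h1 : supN M n p ω < k) (h2 : k ≤ supN M n q ω) :
    p ≤ supArr M n k ω ∧ supArr M n k ω ≤ q := by
  have hdef : supArr M n k ω = sInf {u : ℝ | 0 ≤ u ∧ k ≤ supN M n u ω} := rfl
  rw [hdef]
  constructor
  · refine le_csInf ⟨q, le_trans hp hpq, h2⟩ ?_
    intro u hu
    by_contra hc
    push_neg at hc
    have hle := supN_mono M ω hMmono n hu.1 hc.le
    have := hu.2
    omega
  · exact csInf_le ⟨0, fun u hu => hu.1⟩ ⟨le_trans hp hpq, h2⟩

end Statement18Aux
section Statement18Aux2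
set_option linter.unusedSectionVars false
set_option linter.unusedVariables false

variable {Ω₁ : Type*} [MeasurableSpace Ω₁]

lemma supN_split (M : ℕ → ℝ → Ω₁ → ℕ) (ω : Ω₁) {n m : ℕ} (hnm : n ≤ m) (u : ℝ) :
    supN M m u ω = supN M n u ω + ∑ j ∈ Finset.Ioc n m, M j u ω := by
  have e1 : Finset.Icc 1 n = Finset.Ioc 0 n := Finset.Icc_add_one_left_eq_Ioc 0 n
  have e2 : Finset.Icc 1 m = Finset.Ioc 0 m := Finset.Icc_add_one_left_eq_Ioc 0 m
  rw [supN, supN, e1, e2, ← Finset.sum_Ioc_consecutive _ (Nat.zero_le n) hnm]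

lemma supR_mono_n (S : Setting Ω₁) (M : ℕ → ℝ → Ω₁ → ℕ) (x b : ℝ) (ω : Ω₁)
    (hMmono : ∀ k, 1 ≤ k → ∀ s u : ℝ, 0 ≤ s → s ≤ u → M k s ω ≤ M k u ω)
    (hMrc : ∀ k, 1 ≤ k → ∀ s : ℝ, 0 ≤ s → Tendsto (fun u => M k u ω) (𝓝[>] s) (𝓝 (M k s ω)))
    {t : ℝ} (ht : 0 ≤ t) {B : ℝ} (hB : ∀ s, 0 ≤ s → s ≤ t → B ≤ S.X s ω) :
    Monotone fun n => supR S M x b n t ω := by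
  intro n m hnm
  have hbound : ∀ j : ℕ, ∀ k, k ∈ Finset.Icc 1 (supN M j t ω) →
      max (b - (x + S.X (supArr M j k ω) ω)) 0 ≤ max (b - (x + B)) 0 := by
    intro j k hk
    rw [Finset.mem_Icc] at hk
    obtain ⟨hT0, hTt, _, _⟩ := supArr_mem M ω hMmono hMrc j k ht hk.1 hk.2
    exact max_le_max (by have := hB _ hT0 hTt; linarith) le_rfl
  refine supR_le S M x b n t ω (supR_nonneg S M x b m t ω) ?_
  intro k hk
  rw [Finset.mem_Icc] at hk
  obtain ⟨hT0, hTt, hatt, hbelow⟩ := supArr_mem M ω hMmono hMrc n k ht hk.1 hk.2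
  set T := supArr M n k ω with hTdef
  set k' := supN M m T ω with hk'def
  have hk'ge : k ≤ k' := le_trans hatt (by rw [hk'def, supN_split M ω hnm T]; exact Nat.le_add_right _ _)
  have hk'le : k' ≤ supN M m t ω := supN_mono M ω hMmono m hT0 hTt
  have harr : supArr M m k' ω = T := by
    have hdef : supArr M m k' ω = sInf {u : ℝ | 0 ≤ u ∧ k' ≤ supN M m u ω} := rfl
    rw [hdef]
    apply le_antisymm
    · exact csInf_le ⟨0, fun u hu => hu.1⟩ ⟨hT0, le_rfl⟩
    · refine le_csInf ⟨T, hT0, le_rfl⟩ ?_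
      intro u hu
      by_contra hc
      push_neg at hc
      have h1 : supN M n u ω < supN M n T ω := lt_of_lt_of_le (hbelow u hu.1 hc) hatt
      have h2 : ∑ j ∈ Finset.Ioc n m, M j u ω ≤ ∑ j ∈ Finset.Ioc n m, M j T ω :=
        Finset.sum_le_sum fun j hj =>
          hMmono j (Nat.one_le_iff_ne_zero.2 (by have := (Finset.mem_Ioc.1 hj).1; omega))
            u T hu.1 hc.le
      have h3 : supN M m u ω < k' := by
        rw [supN_split M ω hnm u, hk'def, supN_split M ω hnm T]; omega
      exact absurd hu.2 (not_le.2 h3)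
  have hfin := le_supR S M x b m t ω (hbound m)
    (Finset.mem_Icc.2 ⟨le_trans hk.1 hk'ge, hk'le⟩)
  rw [harr] at hfin
  exact hfin

lemma term_le (S : Setting Ω₁) (M : ℕ → ℝ → Ω₁ → ℕ) (x b : ℝ) (ω : Ω₁)
    (hMmono : ∀ k, 1 ≤ k → ∀ s u : ℝ, 0 ≤ s → s ≤ u → M k s ω ≤ M k u ω)
    (hMrc : ∀ k, 1 ≤ k → ∀ s : ℝ, 0 ≤ s → Tendsto (fun u => M k u ω) (𝓝[>] s) (𝓝 (M k s ω)))
    {t : ℝ} (ht : 0 ≤ t) (hbd : BddBelow ((fun s => S.X s ω) '' Icc 0 t)) (n : ℕ) :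
    ∀ k, k ∈ Finset.Icc 1 (supN M n t ω) →
      max (b - (x + S.X (supArr M n k ω) ω)) 0 ≤ max (b - (x + S.runInf t ω)) 0 := by
  intro k hk
  rw [Finset.mem_Icc] at hk
  obtain ⟨hT0, hTt, _, _⟩ := supArr_mem M ω hMmono hMrc n k ht hk.1 hk.2
  have hrI : S.runInf t ω ≤ S.X (supArr M n k ω) ω :=
    csInf_le hbd ⟨supArr M n k ω, ⟨hT0, hTt⟩, rfl⟩
  exact max_le_max (by linarith) le_rfl

lemma supR_le_classR (S : Setting Ω₁) (M : ℕ → ℝ → Ω₁ → ℕ) (x b : ℝ) (ω : Ω₁)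
    (hMmono : ∀ k, 1 ≤ k → ∀ s u : ℝ, 0 ≤ s → s ≤ u → M k s ω ≤ M k u ω)
    (hMrc : ∀ k, 1 ≤ k → ∀ s : ℝ, 0 ≤ s → Tendsto (fun u => M k u ω) (𝓝[>] s) (𝓝 (M k s ω)))
    {t : ℝ} (ht : 0 ≤ t) (hbd : BddBelow ((fun s => S.X s ω) '' Icc 0 t)) (n : ℕ) :
    supR S M x b n t ω ≤ max (b - (x + S.runInf t ω)) 0 :=
  supR_le S M x b n t ω (le_max_right _ _) (term_le S M x b ω hMmono hMrc ht hbd n)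

lemma tendsto_supR_aux (S : Setting Ω₁) (M : ℕ → ℝ → Ω₁ → ℕ) (x b : ℝ) (ω : Ω₁)
    (hXrc : ∀ s : ℝ, 0 ≤ s → Tendsto (fun u => S.X u ω) (𝓝[>] s) (𝓝 (S.X s ω)))
    (hXll : ∀ s : ℝ, 0 < s → ∃ l, Tendsto (fun u => S.X u ω) (𝓝[<] s) (𝓝 l))
    (hMmono : ∀ k, 1 ≤ k → ∀ s u : ℝ, 0 ≤ s → s ≤ u → M k s ω ≤ M k u ω)
    (hMrc : ∀ k, 1 ≤ k → ∀ s : ℝ, 0 ≤ s → Tendsto (fun u => M k u ω) (𝓝[>] s) (𝓝 (M k s ω)))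
    (hdens : ∀ p q : ℝ, 0 ≤ p → p < q → ∃ k, 1 ≤ k ∧ M k p ω < M k q ω)
    {t : ℝ} (ht : 0 < t) (hjump : Function.leftLim (fun s => S.X s ω) t ≤ S.X t ω) :
    Tendsto (fun n => supR S M x b n t ω) atTop (𝓝 (max (b - (x + S.runInf t ω)) 0)) := by
  have hbd : BddBelow ((fun s => S.X s ω) '' Icc 0 t) :=
    bddBelow_image_Icc_of_cadlag _ t hXrc hXll
  have hne : ((fun s => S.X s ω) '' Icc 0 t).Nonempty := ⟨S.X 0 ω, 0, ⟨le_rfl, ht.le⟩, rfl⟩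
  have hIdef : S.runInf t ω = sInf ((fun s => S.X s ω) '' Icc 0 t) := rfl
  set I := S.runInf t ω with hI
  have hpoint : ∀ ε : ℝ, 0 < ε → ∃ s, 0 ≤ s ∧ s < t ∧ S.X s ω < I + ε := by
    intro ε hε
    obtain ⟨y, ⟨s₀, hs₀, rfl⟩, hy⟩ := exists_lt_of_csInf_lt hne
      (show sInf ((fun s => S.X s ω) '' Icc 0 t) < I + ε / 2 by rw [← hIdef]; linarith)
    rcases lt_or_eq_of_le hs₀.2 with hlt | heq
    · exact ⟨s₀, hs₀.1, hlt, by linarith⟩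
    · subst heq
      obtain ⟨l, hl⟩ := hXll s₀ ht
      have hll' : Function.leftLim (fun s => S.X s ω) s₀ = l :=
        leftLim_eq_of_tendsto hl
      have h1 : ∀ᶠ u in 𝓝[<] s₀, S.X u ω < l + ε / 2 :=
        hl.eventually (eventually_lt_nhds (by linarith))
      have h2 : Ioo (0:ℝ) s₀ ∈ 𝓝[<] s₀ := Ioo_mem_nhdsLT_of_mem ⟨ht, le_rfl⟩
      obtain ⟨u, hu1, hu2⟩ := (h1.and (eventually_of_mem h2 fun _ h => h)).exists
      have hlle : l ≤ S.X s₀ ω := by rw [← hll']; exact hjump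
      exact ⟨u, hu2.1.le, hu2.2, by linarith⟩
  rw [Metric.tendsto_atTop]
  intro ε hε
  have hub : ∀ n, supR S M x b n t ω ≤ max (b - (x + I)) 0 := fun n =>
    supR_le_classR S M x b ω hMmono hMrc ht.le hbd n
  have hlb : ∃ N, ∀ n ≥ N, max (b - (x + I)) 0 - ε / 2 ≤ supR S M x b n t ω := by
    rcases le_or_gt (b - (x + I)) 0 with hc | hc
    · refine ⟨0, fun n _ => ?_⟩
      have h1 := supR_nonneg S M x b n t ω
      have h2 : max (b - (x + I)) 0 = 0 := max_eq_right hc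
      rw [h2]; linarith
    · have hC : max (b - (x + I)) 0 = b - (x + I) := max_eq_left hc.le
      obtain ⟨s, hs0, hst, hsX⟩ := hpoint (ε / 4) (by linarith)
      have h1 : ∀ᶠ u in 𝓝[>] s, S.X u ω < S.X s ω + ε / 4 :=
        (hXrc s hs0).eventually (eventually_lt_nhds (by linarith))
      have h2 : Ioo s t ∈ 𝓝[>] s := Ioo_mem_nhdsGT_of_mem ⟨le_rfl, hst⟩
      obtain ⟨w, hw, hw2⟩ := mem_nhdsGT_iff_exists_Ioo_subset.1
        (h1.and (eventually_of_mem h2 fun _ h => h))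
      obtain ⟨p, hsp, hpw⟩ := exists_between (show s < w from hw)
      obtain ⟨q, hpq, hqw⟩ := exists_between hpw
      have hp0 : 0 ≤ p := le_trans hs0 hsp.le
      have hkey : ∀ u, p ≤ u → u ≤ q → S.X u ω < I + ε / 2 ∧ u ≤ t := by
        intro u h1u h2u
        have hu : u ∈ Ioo s w := ⟨lt_of_lt_of_le hsp h1u, lt_of_le_of_lt h2u hqw⟩
        obtain ⟨hXu, hu2⟩ := hw2 hu
        exact ⟨by linarith, hu2.2.le⟩
      obtain ⟨k₀, hk₀1, hk₀⟩ := hdens p q hp0 hpq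
      refine ⟨k₀, fun n hn => ?_⟩
      have hlt : supN M n p ω < supN M n q ω := by
        rw [supN, supN]
        exact Finset.sum_lt_sum
          (fun j hj => hMmono j (Finset.mem_Icc.1 hj).1 p q hp0 hpq.le)
          ⟨k₀, Finset.mem_Icc.2 ⟨hk₀1, hn⟩, hk₀⟩
      set k := supN M n p ω + 1 with hkdef
      have hk1 : 1 ≤ k := Nat.le_add_left 1 _
      have hkq : k ≤ supN M n q ω := hlt
      have hqt : q ≤ t := (hkey q (by linarith) le_rfl).2
      have hkt : k ≤ supN M n t ω :=
        le_trans hkq (supN_mono M ω hMmono n (le_trans hp0 hpq.le) hqt)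
      obtain ⟨hTp, hTq⟩ := supArr_between M ω hMmono n k hp0 hpq.le (Nat.lt_succ_self _) hkq
      have hXT : S.X (supArr M n k ω) ω < I + ε / 2 := (hkey _ hTp hTq).1
      have hterm : max (b - (x + I)) 0 - ε / 2 ≤ max (b - (x + S.X (supArr M n k ω) ω)) 0 :=
        le_max_of_le_left (by rw [hC]; linarith)
      exact le_trans hterm (le_supR S M x b n t ω (term_le S M x b ω hMmono hMrc ht.le hbd n)
        (Finset.mem_Icc.2 ⟨hk1, hkt⟩))
  obtain ⟨N, hN⟩ := hlb
  refine ⟨N, fun n hn => ?_⟩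
  have h1 := hub n
  have h2 := hN n hn
  rw [Real.dist_eq, abs_sub_comm, abs_of_nonneg (by linarith)]
  linarith

end Statement18Aux2
section Statement18Aux3
set_option linter.unusedSectionVars false
set_option linter.unusedVariables false

lemma abs_leftLim_sub_le (f : ℝ → ℝ) {y a c r : ℝ} (hay : a < y)
    (hl : ∃ l, Tendsto f (𝓝[<] y) (𝓝 l))
    (h : ∀ u, a < u → u < y → |f u - c| ≤ r) :
    |Function.leftLim f y - c| ≤ r := by
  obtain ⟨l, hl⟩ := hl
  have hL : Function.leftLim f y = l :=
    leftLim_eq_of_tendsto hl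
  rw [hL]
  have ht : Tendsto (fun u => |f u - c|) (𝓝[<] y) (𝓝 |l - c|) := (hl.sub_const c).abs
  apply le_of_tendsto ht
  filter_upwards [Ioo_mem_nhdsLT_of_mem (⟨hay, le_rfl⟩ : y ∈ Ioc a y)] with u hu
  exact h u hu.1 hu.2

lemma countable_downjumps (f : ℝ → ℝ)
    (hrc : ∀ s : ℝ, 0 ≤ s → Tendsto f (𝓝[>] s) (𝓝 (f s)))
    (hll : ∀ s : ℝ, 0 < s → ∃ l, Tendsto f (𝓝[<] s) (𝓝 l)) :
    Set.Countable {t : ℝ | 0 < t ∧ f t < Function.leftLim f t} := by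
  have main : ∀ m : ℕ, Set.Finite
      {t : ℝ | 0 < t ∧ t ≤ (m:ℝ) ∧ f t + 1 / ((m:ℝ) + 1) < Function.leftLim f t} := by
    intro m
    by_contra hinf
    have hinf : {t : ℝ | 0 < t ∧ t ≤ (m:ℝ) ∧
        f t + 1 / ((m:ℝ) + 1) < Function.leftLim f t}.Infinite := hinf
    set D := {t : ℝ | 0 < t ∧ t ≤ (m:ℝ) ∧ f t + 1 / ((m:ℝ) + 1) < Function.leftLim f t}
      with hD
    have hDsub : D ⊆ Icc 0 (m:ℝ) := fun t ht => ⟨ht.1.le, ht.2.1⟩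
    have e := Set.Infinite.natEmbedding D hinf
    obtain ⟨s₀, hs₀mem, φ, hφ, hconv⟩ :=
      (isCompact_Icc : IsCompact (Icc (0:ℝ) (m:ℝ))).tendsto_subseq
        (x := fun n => ((e n : D) : ℝ)) (fun n => hDsub (e n).2)
    set u : ℕ → ℝ := (fun n => ((e n : D) : ℝ)) ∘ φ with hu
    have huD : ∀ n, u n ∈ D := fun n => (e (φ n)).2
    have huconv : Tendsto u atTop (𝓝 s₀) := hconv
    have huinj : Function.Injective u := fun a b h =>
      hφ.injective (e.injective (Subtype.coe_injective h))
    set ε : ℝ := 1 / (4 * ((m:ℝ) + 1)) with hε'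
    have hε : 0 < ε := by positivity
    have hjump : ∀ y ∈ D, f y + 4 * ε ≤ Function.leftLim f y := by
      intro y hy
      have h1 := hy.2.2
      have h2 : 1 / ((m:ℝ) + 1) = 4 * ε := by
        rw [hε']; field_simp
      linarith
    have hs₀0 : 0 ≤ s₀ := hs₀mem.1
    have hR : ∃ δ > 0, ∀ y ∈ Ioo s₀ (s₀ + δ), y ∉ D := by
      have h0 : Tendsto (fun v => |f v - f s₀|) (𝓝[>] s₀) (𝓝 |f s₀ - f s₀|) :=
        ((hrc s₀ hs₀0).sub_const _).abs
      have h1 : ∀ᶠ v in 𝓝[>] s₀, |f v - f s₀| < ε := by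
        apply h0.eventually (p := fun z => z < ε)
        apply eventually_lt_nhds
        simpa using hε
      obtain ⟨w, hw, hw2⟩ := mem_nhdsGT_iff_exists_Ioo_subset.1 h1
      refine ⟨w - s₀, by simpa using sub_pos.2 (show s₀ < w from hw), ?_⟩
      intro y hy hyD
      have hy' : y ∈ Ioo s₀ w := ⟨hy.1, by have := hy.2; linarith⟩
      have hfy : |f y - f s₀| ≤ ε := (hw2 hy').le
      have hlim : |Function.leftLim f y - f s₀| ≤ ε :=
        abs_leftLim_sub_le f hy'.1 (hll y hyD.1)
          (fun v h1v h2v => (hw2 ⟨h1v, lt_trans h2v hy'.2⟩).le)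
      have hj := hjump y hyD
      have ha1 := abs_le.1 hfy
      have ha2 := abs_le.1 hlim
      linarith [ha1.1, ha1.2, ha2.1, ha2.2]
    have hL : ∃ δ > 0, ∀ y ∈ Ioo (s₀ - δ) s₀, y ∉ D := by
      rcases eq_or_lt_of_le hs₀0 with h0 | h0
      · refine ⟨1, one_pos, fun y hy hyD => ?_⟩
        have : y < 0 := by rw [← h0] at hy; exact hy.2
        exact absurd hyD.1 (not_lt.2 this.le)
      · obtain ⟨l, hl⟩ := hll s₀ h0
        have h0' : Tendsto (fun v => |f v - l|) (𝓝[<] s₀) (𝓝 |l - l|) := (hl.sub_const _).abs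
        have h1 : ∀ᶠ v in 𝓝[<] s₀, |f v - l| < ε := by
          apply h0'.eventually (p := fun z => z < ε)
          apply eventually_lt_nhds
          simpa using hε
        obtain ⟨w, hw, hw2⟩ := mem_nhdsLT_iff_exists_Ioo_subset.1 h1
        refine ⟨s₀ - w, by simpa using sub_pos.2 (show w < s₀ from hw), ?_⟩
        intro y hy hyD
        have hy' : y ∈ Ioo w s₀ := ⟨by have := hy.1; linarith, hy.2⟩
        have hfy : |f y - l| ≤ ε := (hw2 hy').le
        have hlim : |Function.leftLim f y - l| ≤ ε :=
          abs_leftLim_sub_le f hy'.1 (hll y hyD.1)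
            (fun v h1v h2v => (hw2 ⟨h1v, lt_trans h2v hy'.2⟩).le)
        have hj := hjump y hyD
        have ha1 := abs_le.1 hfy
        have ha2 := abs_le.1 hlim
        linarith [ha1.1, ha1.2, ha2.1, ha2.2]
    obtain ⟨δR, hδR, hR2⟩ := hR
    obtain ⟨δL, hδL, hL2⟩ := hL
    have hU : Ioo (s₀ - δL) (s₀ + δR) ∈ 𝓝 s₀ := Ioo_mem_nhds (by linarith) (by linarith)
    have hev : ∀ᶠ n in atTop, u n ∈ Ioo (s₀ - δL) (s₀ + δR) := huconv.eventually_mem hU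
    obtain ⟨N, hN⟩ := eventually_atTop.1 hev
    have h1 := hN N le_rfl
    have h2 := hN (N + 1) (Nat.le_succ N)
    have hne2 : u N ≠ u (N + 1) := fun h => (by omega : N ≠ N + 1) (huinj h)
    have hex : ∃ n, u n ∈ Ioo (s₀ - δL) (s₀ + δR) ∧ u n ≠ s₀ := by
      rcases eq_or_ne (u N) s₀ with h | h
      · exact ⟨N + 1, h2, fun hc => hne2 (h.trans hc.symm)⟩
      · exact ⟨N, h1, h⟩
    obtain ⟨n, hn1, hn2⟩ := hex
    rcases lt_or_gt_of_ne hn2 with hlt | hgt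
    · exact hL2 (u n) ⟨hn1.1, hlt⟩ (huD n)
    · exact hR2 (u n) ⟨hgt, hn1.2⟩ (huD n)
  have hsub : {t : ℝ | 0 < t ∧ f t < Function.leftLim f t} ⊆
      ⋃ m : ℕ, {t : ℝ | 0 < t ∧ t ≤ (m:ℝ) ∧ f t + 1 / ((m:ℝ) + 1) < Function.leftLim f t} := by
    intro y hy
    have hd : 0 < Function.leftLim f y - f y := by have := hy.2; linarith
    obtain ⟨m₁, hm₁⟩ := exists_nat_gt (max y (1 / (Function.leftLim f y - f y)))
    refine Set.mem_iUnion.2 ⟨m₁, hy.1, le_of_lt (lt_of_le_of_lt (le_max_left _ _) hm₁), ?_⟩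
    have h2 : 1 / (Function.leftLim f y - f y) < (m₁:ℝ) :=
      lt_of_le_of_lt (le_max_right _ _) hm₁
    have h3 : 1 < (Function.leftLim f y - f y) * (m₁:ℝ) := by
      rw [div_lt_iff₀ hd] at h2; linarith
    have h4 : 1 / ((m₁:ℝ) + 1) < Function.leftLim f y - f y := by
      rw [div_lt_iff₀ (by positivity)]
      have hm0 : (0:ℝ) ≤ (m₁:ℝ) := Nat.cast_nonneg _
      nlinarith
    linarith
  exact Set.Countable.mono hsub (Set.countable_iUnion fun m => (main m).countable)

end Statement18Aux3
section Statement18Aux4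
set_option linter.unusedSectionVars false
set_option linter.unusedVariables false

variable {Ω₁ : Type*} [MeasurableSpace Ω₁]

lemma sum_rates (η : ℕ → ℝ) (n : ℕ) :
    ∑ k ∈ Finset.Icc 1 n, (η k - η (k - 1)) = η n - η 0 := by
  induction n with
  | zero => simp
  | succ n ih =>
    rw [Finset.sum_Icc_succ_top (Nat.le_add_left 1 n) _, ih]
    simp only [Nat.add_sub_cancel]
    ring

lemma ae_dense (S : Setting Ω₁)
    (η : ℕ → ℝ) (hη0 : η 0 = 0) (hηlim : Tendsto η atTop atTop)
    (M : ℕ → ℝ → Ω₁ → ℕ)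
    (hpp : ∀ k : ℕ, 1 ≤ k → IsPoissonProcess S.P (M k) (η k - η (k - 1)))
    (hindep : iIndepFun
        (fun k ω => fun t : ℝ => M k t ω) S.P) :
    ∀ᵐ ω ∂S.P, ∀ p q : ℚ, 0 ≤ (p:ℝ) → (p:ℝ) < (q:ℝ) →
      ∃ k, 1 ≤ k ∧ M k (p:ℝ) ω < M k (q:ℝ) ω := by
  haveI := S.prob
  rw [ae_all_iff]
  intro p
  rw [ae_all_iff]
  intro q
  by_cases hp : 0 ≤ (p:ℝ)
  swap
  · filter_upwards with ω h; exact absurd h hp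
  by_cases hpq : (p:ℝ) < (q:ℝ)
  swap
  · filter_upwards with ω _ h; exact absurd h hpq
  set c : ℝ := (q:ℝ) - (p:ℝ) with hc'
  have hc : 0 < c := by rw [hc']; linarith
  have key : ∀ n : ℕ, S.P {ω | ∀ k, 1 ≤ k → ¬ M k (p:ℝ) ω < M k (q:ℝ) ω}
      ≤ ENNReal.ofReal (Real.exp (-(η n * c))) := by
    intro n
    have hsub : {ω | ∀ k, 1 ≤ k → ¬ M k (p:ℝ) ω < M k (q:ℝ) ω} ⊆
        ⋂ k ∈ Finset.Icc 1 n,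
          (fun ω => fun t : ℝ => M k t ω) ⁻¹' {g : ℝ → ℕ | g (q:ℝ) - g (p:ℝ) = 0} := by
      intro ω hω
      simp only [Set.mem_iInter, Set.mem_preimage, Set.mem_setOf_eq]
      intro k hk
      exact Nat.sub_eq_zero_of_le (not_lt.1 (hω k (Finset.mem_Icc.1 hk).1))
    refine le_trans (measure_mono hsub) ?_
    have hmeas : ∀ k ∈ Finset.Icc 1 n,
        MeasurableSet[(inferInstance : MeasurableSpace (ℝ → ℕ))]
          {g : ℝ → ℕ | g (q:ℝ) - g (p:ℝ) = 0} := by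
      intro k _
      have hmf : Measurable fun g : ℝ → ℕ => g (q:ℝ) - g (p:ℝ) :=
        (measurable_pi_apply _).sub (measurable_pi_apply _)
      exact hmf (measurableSet_singleton 0)
    rw [hindep.measure_inter_preimage_eq_mul (Finset.Icc 1 n) hmeas]
    have hfac : ∀ k ∈ Finset.Icc 1 n,
        S.P ((fun ω => fun t : ℝ => M k t ω) ⁻¹' {g : ℝ → ℕ | g (q:ℝ) - g (p:ℝ) = 0})
          = ENNReal.ofReal (Real.exp (-((η k - η (k - 1)) * c))) := by
      intro k hk
      have h := (hpp k (Finset.mem_Icc.1 hk).1).pois_incr (p:ℝ) (q:ℝ) hp hpq.le 0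
      have heq : ((fun ω => fun t : ℝ => M k t ω) ⁻¹' {g : ℝ → ℕ | g (q:ℝ) - g (p:ℝ) = 0})
          = {ω | M k (q:ℝ) ω - M k (p:ℝ) ω = 0} := rfl
      rw [heq, h]
      simp [hc']
    rw [Finset.prod_congr rfl hfac,
      ← ENNReal.ofReal_prod_of_nonneg (fun i _ => (Real.exp_pos _).le)]
    apply le_of_eq
    congr 1
    rw [← Real.exp_sum]
    congr 1
    rw [Finset.sum_neg_distrib, ← Finset.sum_mul, sum_rates η n, hη0, sub_zero]
  have h0 : S.P {ω | ∀ k, 1 ≤ k → ¬ M k (p:ℝ) ω < M k (q:ℝ) ω} = 0 := by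
    have htend : Tendsto (fun n => ENNReal.ofReal (Real.exp (-(η n * c)))) atTop (𝓝 0) := by
      rw [← ENNReal.ofReal_zero]
      apply ENNReal.tendsto_ofReal
      have h1 : Tendsto (fun n => η n * c) atTop atTop := hηlim.atTop_mul_const hc
      have h2 : Tendsto (fun n => -(η n * c)) atTop atBot := tendsto_neg_atTop_atBot.comp h1
      exact Real.tendsto_exp_atBot.comp h2
    exact le_antisymm (ge_of_tendsto' htend (fun n => key n)) (zero_le)
  rw [ae_iff]
  refine measure_mono_null ?_ h0
  intro ω hω
  simp only [Set.mem_setOf_eq] at hω ⊢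
  push_neg at hω
  intro k hk
  exact not_lt.2 (hω.2.2 k hk)
end Statement18Aux4
/-- step (i) of the proof of Theorem 5.1: under the superposition coupling,
for every `x, b ∈ ℝ`, almost surely: at every time `t > 0` at which `X` does not jump downward,
`R^{b,η_n}_t` increases to `R^{b,∞}_t = (b - X̲_t)⁺`; consequently `U^{b,η_n}_t` increases to
`U^{b,∞}_t` for Lebesgue-a.e. `t > 0`. -/
theorem barrier_control_convergence {Ω : Type*} [MeasurableSpace Ω] (S : Setting Ω)
    (η : ℕ → ℝ) (hη0 : η 0 = 0) (hηmono : StrictMono η) (hηlim : Tendsto η atTop atTop)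
    (M : ℕ → ℝ → Ω → ℕ)
    (hpp : ∀ k : ℕ, 1 ≤ k → IsPoissonProcess S.P (M k) (η k - η (k - 1)))
    (hindep : iIndepFun
        (fun k ω => fun t : ℝ => M k t ω) S.P)
    (hindepX : IndepFun (fun ω => fun p : ℕ × ℝ => M p.1 p.2 ω)
        (fun ω => fun t : ℝ => S.X t ω) S.P)
    (x b : ℝ) :
    ∀ᵐ ω ∂S.P,
      (∀ t : ℝ, 0 < t → Function.leftLim (fun s => S.X s ω) t ≤ S.X t ω →
        Monotone (fun n => supR S M x b n t ω) ∧
        Tendsto (fun n => supR S M x b n t ω) atTop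
          (𝓝 (max (b - (x + S.runInf t ω)) 0))) ∧
      ∀ᵐ t ∂(volume.restrict (Ioi (0:ℝ))),
        Tendsto (fun n => x + S.X t ω + supR S M x b n t ω) atTop
          (𝓝 (x + S.X t ω + max (b - (x + S.runInf t ω)) 0)) := by
  haveI := S.prob
  have hdens0 := ae_dense S η hη0 hηlim M hpp hindep
  have hM : ∀ᵐ ω ∂S.P, ∀ k : ℕ, 1 ≤ k →
      (∀ s t : ℝ, 0 ≤ s → s ≤ t → M k s ω ≤ M k t ω) ∧
      (∀ t : ℝ, 0 ≤ t → Tendsto (fun s => M k s ω) (𝓝[>] t) (𝓝 (M k t ω))) := by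
    rw [ae_all_iff]
    intro k
    by_cases hk : 1 ≤ k
    · filter_upwards [(hpp k hk).mono, (hpp k hk).right_cont] with ω h1 h2
      exact fun _ => ⟨h1, h2⟩
    · filter_upwards with ω h; exact absurd h hk
  filter_upwards [hdens0, hM, S.cadlag] with ω hd hMk hcad
  have hXrc : ∀ s : ℝ, 0 ≤ s → Tendsto (fun u => S.X u ω) (𝓝[>] s) (𝓝 (S.X s ω)) :=
    fun s hs => (hcad s hs).1
  have hXll : ∀ s : ℝ, 0 < s → ∃ l, Tendsto (fun u => S.X u ω) (𝓝[<] s) (𝓝 l) :=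
    fun s hs => (hcad s hs.le).2 hs
  have hMmono : ∀ k, 1 ≤ k → ∀ s u : ℝ, 0 ≤ s → s ≤ u → M k s ω ≤ M k u ω :=
    fun k hk => (hMk k hk).1
  have hMrc : ∀ k, 1 ≤ k → ∀ s : ℝ, 0 ≤ s →
      Tendsto (fun u => M k u ω) (𝓝[>] s) (𝓝 (M k s ω)) := fun k hk => (hMk k hk).2
  have hdens' : ∀ p q : ℝ, 0 ≤ p → p < q → ∃ k, 1 ≤ k ∧ M k p ω < M k q ω := by
    intro p q hp hpq
    obtain ⟨p', hp1, hp2⟩ := exists_rat_btwn hpq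
    obtain ⟨q', hq1, hq2⟩ := exists_rat_btwn hp2
    obtain ⟨k, hk1, hk⟩ := hd p' q' (le_trans hp hp1.le) hq1
    refine ⟨k, hk1, ?_⟩
    have h1 := hMmono k hk1 p p' hp hp1.le
    have h2 := hMmono k hk1 q' q (le_trans hp (le_trans hp1.le hq1.le)) hq2.le
    omega
  have hmain : ∀ t : ℝ, 0 < t → Function.leftLim (fun s => S.X s ω) t ≤ S.X t ω →
      Monotone (fun n => supR S M x b n t ω) ∧
      Tendsto (fun n => supR S M x b n t ω) atTop
        (𝓝 (max (b - (x + S.runInf t ω)) 0)) := by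
    intro t ht hjump
    have hbd : BddBelow ((fun s => S.X s ω) '' Icc 0 t) :=
      bddBelow_image_Icc_of_cadlag _ t hXrc hXll
    obtain ⟨B, hB⟩ := hbd
    constructor
    · exact supR_mono_n S M x b ω hMmono hMrc ht.le
        (fun s h1 h2 => hB ⟨s, ⟨h1, h2⟩, rfl⟩)
    · exact tendsto_supR_aux S M x b ω hXrc hXll hMmono hMrc hdens' ht hjump
  refine ⟨hmain, ?_⟩
  have hcount := countable_downjumps (fun s => S.X s ω) hXrc hXll
  have hnull : ∀ᵐ t ∂(volume : Measure ℝ),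
      ¬ (0 < t ∧ S.X t ω < Function.leftLim (fun s => S.X s ω) t) := by
    rw [ae_iff]
    simp only [not_not]
    exact hcount.measure_zero volume
  filter_upwards [ae_restrict_of_ae hnull, ae_restrict_mem measurableSet_Ioi] with t hnt hmem
  have ht : 0 < t := hmem
  have hjump : Function.leftLim (fun s => S.X s ω) t ≤ S.X t ω := by
    by_contra hcon
    push_neg at hcon
    exact hnt ⟨ht, hcon⟩
  exact tendsto_const_nhds.add ((hmain t ht hjump).2)

end PoissonControl
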